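/- Let (V, w, m) be a finite connected weighted graph and φ : ℝ → ℝ be odd, increasing, and concave on [0,∞). Let x ~ y, let C > 0, and let f : V → ℝ satisfy |f(u) − f(v)| ≤ C·d₀(u,v) for all u, v ∈ V and f(y) − f(x) = C. Let π : V × V → [0,∞) vanish outside B₁(x) × B₁(y), satisfy the marginal conditions Σ_{x′∈B₁(x)} π(x′,y′) = w(y,y′)/m(y) for every y′ ~ y and Σ_{y′∈B₁(y)} π(x′,y′) = w(x,x′)/m(x) for every x′ ~ x, and satisfy π(x′,y′) = 0 whenever x′ ≠ x, y′ ≠ y and d₀(x′,y′) = 2. Then Δ_φ f(x) − Δ_φ f(y) ≥ φ(C) · Σ_{x′,y′∈V} π(x′,y′)·(1 − d₀(x′,y′)). -/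

import Mathlib

theorem stmt18 {V : Type*} [Fintype V] [DecidableEq V]
    (w : V → V → ℝ) (hsymm : ∀ a b, w a b = w b a) (hloop : ∀ a, w a a = 0)
    (hnonneg : ∀ a b, 0 ≤ w a b)
    (m : V → ℝ) (hm : ∀ a, 0 < m a)
    (G : SimpleGraph V) (hGadj : ∀ a b, G.Adj a b ↔ a ≠ b ∧ 0 < w a b)
    (hconn : G.Connected)
    (d₀ : V → V → ℕ) (hd₀ : ∀ a b, d₀ a b = G.dist a b)
    (φ : ℝ → ℝ) (hodd : ∀ t, φ (-t) = -φ t) (hmono : Monotone φ)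
    (hconc : ConcaveOn ℝ (Set.Ici 0) φ)
    (Δφ : (V → ℝ) → (V → ℝ))
    (hΔφ : ∀ (f : V → ℝ) (v : V), Δφ f v = ∑ u : V, w v u / m v * φ (f u - f v))
    (x y : V) (hxy : G.Adj x y)
    (C : ℝ) (hC : 0 < C)
    (f : V → ℝ) (hLip : ∀ u v, |f u - f v| ≤ C * (d₀ u v : ℝ))
    (hfC : f y - f x = C)
    (π : V → V → ℝ) (hπ : ∀ a b, 0 ≤ π a b)
    (hsupp : ∀ a b, π a b ≠ 0 → d₀ x a ≤ 1 ∧ d₀ y b ≤ 1)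
    (hmarg1 : ∀ y' : V, G.Adj y y' → ∑ a : V, π a y' = w y y' / m y)
    (hmarg2 : ∀ x' : V, G.Adj x x' → ∑ b : V, π x' b = w x x' / m x)
    (hno5 : ∀ a b : V, a ≠ x → b ≠ y → d₀ a b = 2 → π a b = 0) :
    φ C * ∑ a : V, ∑ b : V, π a b * (1 - (d₀ a b : ℝ)) ≤ Δφ f x - Δφ f y := by
  have hφ0 : φ 0 = 0 := by have := hodd 0; simp at this; linarith
  have hφC : 0 ≤ φ C := by
    have := hmono hC.le; rwa [hφ0] at this
  -- concavity lower bound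
  have hA : ∀ t : ℝ, 0 ≤ t → t ≤ C → t / C * φ C ≤ φ t := by
    intro t ht htC
    have h1 : (0:ℝ) ∈ Set.Ici (0:ℝ) := Set.mem_Ici.mpr le_rfl
    have h2 : C ∈ Set.Ici (0:ℝ) := hC.le
    have ha : (0:ℝ) ≤ 1 - t / C := by
      have : t / C ≤ 1 := by rw [div_le_one hC]; exact htC
      linarith
    have hb : (0:ℝ) ≤ t / C := div_nonneg ht hC.le
    have := hconc.2 h1 h2 ha hb (by ring)
    simp only [smul_eq_mul] at this
    rw [hφ0] at this
    have harg : (1 - t / C) * 0 + t / C * C = t := by field_simp; ring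
    rw [harg] at this
    linarith
  have hsup : ∀ t : ℝ, 0 ≤ t → t ≤ C → φ C ≤ φ t + φ (C - t) := by
    intro t ht htC
    have h1 := hA t ht htC
    have h2 := hA (C - t) (by linarith) (by linarith)
    have : (t / C + (C - t) / C) * φ C ≤ φ t + φ (C - t) := by
      rw [add_mul]; linarith
    have hcc : t / C + (C - t) / C = 1 := by field_simp; ring
    rw [hcc, one_mul] at this; exact this
  -- distance facts
  have hdxy : G.dist x y = 1 := SimpleGraph.dist_eq_one_iff_adj.mpr hxy
  -- Lipschitz consequences
  have hLip1 : ∀ u v : V, d₀ u v ≤ 1 → |f u - f v| ≤ C := by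
    intro u v h
    have := hLip u v
    have : |f u - f v| ≤ C * (d₀ u v : ℝ) := this
    calc |f u - f v| ≤ C * (d₀ u v : ℝ) := this
      _ ≤ C * 1 := by
          apply mul_le_mul_of_nonneg_left _ hC.le
          exact_mod_cast h
      _ = C := mul_one C
  -- key per-pair inequality
  have key : ∀ a b : V, π a b ≠ 0 →
      φ C * (1 - (d₀ a b : ℝ)) ≤ φ (f a - f x) - φ (f b - f y) := by
    intro a b hab
    obtain ⟨hxa, hyb⟩ := hsupp a b hab
    have hfa : |f a - f x| ≤ C := by
      have := hLip1 x a hxa; rwa [abs_sub_comm] at this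
    have hfb : |f b - f y| ≤ C := by
      have := hLip1 y b hyb; rwa [abs_sub_comm] at this
    have hfa1 : -C ≤ f a - f x := (abs_le.mp hfa).1
    have hfa2 : f a - f x ≤ C := (abs_le.mp hfa).2
    have hfb1 : -C ≤ f b - f y := (abs_le.mp hfb).1
    have hfb2 : f b - f y ≤ C := (abs_le.mp hfb).2
    have hφnegC : φ (-C) = -φ C := hodd C
    have hub : φ (f b - f y) ≤ φ C := hmono hfb2
    have hlb : -φ C ≤ φ (f a - f x) := by
      have := hmono hfa1; rwa [hφnegC] at this
    match hn : d₀ a b with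
    | 0 =>
      -- a = b
      have hdist : G.dist a b = 0 := by rw [← hd₀]; exact hn
      have hab' : a = b := (hconn.dist_eq_zero_iff).mp hdist
      subst hab'
      -- f a - f y = (f a - f x) - C
      have hrw : f a - f y = (f a - f x) - C := by linarith
      have ht0 : 0 ≤ f a - f x := by
        have : -C ≤ f a - f y := hfb1
        linarith
      have := hsup (f a - f x) ht0 hfa2
      have hro : φ (f a - f y) = - φ (C - (f a - f x)) := by
        rw [hrw, show (f a - f x) - C = -(C - (f a - f x)) by ring, hodd]
      push_cast
      rw [hro]
      linarith
    | 1 =>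
      have hd : (f a - f x) - (f b - f y) = (f a - f b) + C := by linarith
      have hfab : |f a - f b| ≤ C := by
        have := hLip a b
        rw [hn] at this; simpa using this
      have : f b - f y ≤ f a - f x := by
        have := (abs_le.mp hfab).1; linarith
      have := hmono this
      push_cast
      linarith
    | 2 =>
      -- must have a = x or b = y
      by_cases hax : a = x
      · subst hax
        simp only [sub_self, hφ0]
        push_cast
        nlinarith [hub, hφC]
      · by_cases hby : b = y
        · subst hby
          simp only [sub_self, hφ0]
          push_cast
          nlinarith [hlb, hφC]
        · exact absurd (hno5 a b hax hby hn) hab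
    | (n+3) =>
      have h3 : (1 : ℝ) - ((n+3 : ℕ) : ℝ) ≤ -2 := by push_cast; linarith [Nat.cast_nonneg (α := ℝ) n]
      have : φ C * (1 - ((n+3 : ℕ) : ℝ)) ≤ φ C * (-2) := by
        apply mul_le_mul_of_nonneg_left h3 hφC
      calc φ C * (1 - ((n+3:ℕ) : ℝ)) ≤ φ C * (-2) := this
        _ = -φ C - φ C := by ring
        _ ≤ φ (f a - f x) - φ (f b - f y) := by linarith
  -- rewrite Δφ f x as double sum
  have hax : Δφ f x = ∑ a : V, ∑ b : V, π a b * φ (f a - f x) := by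
    rw [hΔφ]
    apply Finset.sum_congr rfl
    intro a _
    rw [← Finset.sum_mul]
    by_cases hadj : G.Adj x a
    · rw [hmarg2 a hadj]
    · by_cases hax : a = x
      · rw [hax, hloop, zero_div, zero_mul, sub_self, hφ0, mul_zero]
      · have hw : w x a = 0 := by
          by_contra hw
          exact hadj ((hGadj x a).mpr ⟨fun h => hax h.symm, lt_of_le_of_ne (hnonneg x a) (Ne.symm hw)⟩)
        rw [hw, zero_div, zero_mul]
        have hs : ∑ b : V, π a b = 0 := by
          apply Finset.sum_eq_zero
          intro b _
          by_contra hne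
          have hd1 := (hsupp a b hne).1
          rw [hd₀] at hd1
          interval_cases h : G.dist x a
          · exact hax (hconn.dist_eq_zero_iff.mp h).symm
          · exact hadj (SimpleGraph.dist_eq_one_iff_adj.mp h)
        rw [hs, zero_mul]
  have hay : Δφ f y = ∑ a : V, ∑ b : V, π a b * φ (f b - f y) := by
    rw [hΔφ, Finset.sum_comm]
    apply Finset.sum_congr rfl
    intro b _
    rw [← Finset.sum_mul]
    by_cases hadj : G.Adj y b
    · rw [hmarg1 b hadj]
    · by_cases hby : b = y
      · rw [hby, hloop, zero_div, zero_mul, sub_self, hφ0, mul_zero]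
      · have hw : w y b = 0 := by
          by_contra hw
          exact hadj ((hGadj y b).mpr ⟨fun h => hby h.symm, lt_of_le_of_ne (hnonneg y b) (Ne.symm hw)⟩)
        rw [hw, zero_div, zero_mul]
        have hs : ∑ a : V, π a b = 0 := by
          apply Finset.sum_eq_zero
          intro a _
          by_contra hne
          have hd1 := (hsupp a b hne).2
          rw [hd₀] at hd1
          interval_cases h : G.dist y b
          · exact hby (hconn.dist_eq_zero_iff.mp h).symm
          · exact hadj (SimpleGraph.dist_eq_one_iff_adj.mp h)
        rw [hs, zero_mul]
  rw [hax, hay, ← Finset.sum_sub_distrib, Finset.mul_sum]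
  apply Finset.sum_le_sum
  intro a _
  rw [← Finset.sum_sub_distrib, Finset.mul_sum]
  apply Finset.sum_le_sum
  intro b _
  rw [← mul_sub]
  by_cases h : π a b = 0
  · simp [h]
  · have hk := key a b h
    calc φ C * (π a b * (1 - (d₀ a b : ℝ)))
        = π a b * (φ C * (1 - (d₀ a b : ℝ))) := by ring
      _ ≤ π a b * (φ (f a - f x) - φ (f b - f y)) :=
          mul_le_mul_of_nonneg_left hk (hπ a b)
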